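/- Let u : ℝ^d → ℝ be a function implemented by a ReLU² network of depth D and width W. Then u is C¹, and the function x ↦ ‖∇u(x)‖₂² = Σ_{i=1}^d (∂u/∂xᵢ(x))² can be implemented exactly by a ReLU–ReLU² network of depth D + 3 and width at most d·(D+2)·W. -/

import Mathlib

noncomputable section

/-- The `ReLU` activation function `σ₁(t) = max(t,0)`. -/
noncomputable def relu1 (t : ℝ) : ℝ := max t 0

/-- The `ReLU²` activation function `σ₂(t) = max(t,0)²`. -/
noncomputable def relu2 (t : ℝ) : ℝ := (max t 0) ^ 2

/-- `NNHidden acts m W D k g` : `g : ℝ^m → ℝ^k` is a stack of `D` hidden layers of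
widths at most `W`, each layer consisting of an affine map followed by coordinatewise
activations chosen from the set `acts`. -/
inductive NNHidden (acts : Set (ℝ → ℝ)) (m W : ℕ) :
    ℕ → (k : ℕ) → (EuclideanSpace ℝ (Fin m) → (Fin k → ℝ)) → Prop
  | base : NNHidden acts m W 0 m (fun x j => x j)
  | layer {D k k' : ℕ} {g : EuclideanSpace ℝ (Fin m) → Fin k → ℝ}
      (hg : NNHidden acts m W D k g)
      (A : Matrix (Fin k') (Fin k) ℝ) (b : Fin k' → ℝ) (ρ : Fin k' → ℝ → ℝ)
      (hρ : ∀ j, ρ j ∈ acts) (hk' : k' ≤ W) :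
      NNHidden acts m W (D + 1) k' (fun x j => ρ j ((A.mulVec (g x) + b) j))

/-- `IsNetwork acts m D W u` : `u : ℝ^m → ℝ` is implemented by a neural network of
depth `D` (i.e. `D` affine maps and `D − 1` hidden activation layers) and width at
most `W`, whose hidden-unit activations all belong to `acts`. -/
def IsNetwork (acts : Set (ℝ → ℝ)) (m D W : ℕ) (u : EuclideanSpace ℝ (Fin m) → ℝ) : Prop :=
  ∃ (k : ℕ) (g : EuclideanSpace ℝ (Fin m) → Fin k → ℝ)
    (A : Matrix (Fin 1) (Fin k) ℝ) (b : ℝ),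
    NNHidden acts m W (D - 1) k g ∧ ∀ x, u x = A.mulVec (g x) 0 + b



variable {d : ℕ}

lemma relu1_nonneg (t : ℝ) : 0 ≤ relu1 t := le_max_right _ _
lemma relu2_nonneg (t : ℝ) : 0 ≤ relu2 t := sq_nonneg _
lemma relu1_of_nonneg {t : ℝ} (h : 0 ≤ t) : relu1 t = t := max_eq_left h
lemma sqrt_relu2 (t : ℝ) : Real.sqrt (relu2 t) = relu1 t := by
  rw [relu2, show max t 0 = relu1 t from rfl, Real.sqrt_sq (relu1_nonneg t)]

lemma relu2_add_neg (t : ℝ) : relu2 t + relu2 (-t) = t ^ 2 := by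
  rcases le_total t 0 with h | h
  · rw [relu2, relu2, max_eq_right h, max_eq_left (by linarith)]; ring
  · rw [relu2, relu2, max_eq_left h, max_eq_right (by linarith)]; ring

lemma relu2_prod (p q : ℝ) :
    relu2 (p + q) + relu2 (-(p + q)) - relu2 (p - q) - relu2 (-(p - q)) = 4 * (p * q) := by
  have h1 := relu2_add_neg (p + q)
  have h2 := relu2_add_neg (p - q)
  nlinarith [h1, h2]

lemma relu2_le_sq (s : ℝ) : relu2 s ≤ s ^ 2 := by
  rcases le_total s 0 with h | h
  · rw [relu2, max_eq_right h]; simpa using sq_nonneg s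
  · rw [relu2, max_eq_left h]

lemma continuous_relu1 : Continuous relu1 := continuous_id.max continuous_const

lemma hasDerivAt_relu2 (t : ℝ) : HasDerivAt relu2 (2 * relu1 t) t := by
  rcases lt_trichotomy t 0 with h | h | h
  · have h0 : HasDerivAt (fun _ : ℝ => (0:ℝ)) 0 t := hasDerivAt_const _ _
    have he : relu2 =ᶠ[nhds t] fun _ => (0:ℝ) := by
      filter_upwards [Iio_mem_nhds h] with s hs
      simp [relu2, max_eq_right (Set.mem_Iio.mp hs).le]
    have := h0.congr_of_eventuallyEq he
    simpa [relu1, max_eq_right h.le] using this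
  · subst h
    rw [hasDerivAt_iff_isLittleO]
    have hb : (fun s : ℝ => relu2 s - relu2 0 - (s - 0) • (2 * relu1 0)) =
        fun s : ℝ => relu2 s := by
      funext s; simp [relu2, relu1]
    rw [hb]
    rw [Asymptotics.isLittleO_iff]
    intro c hc
    filter_upwards [Metric.ball_mem_nhds (0:ℝ) hc] with s hs
    have habs : |s| < c := by simpa [Real.dist_eq] using hs
    have h1 : ‖relu2 s‖ = relu2 s := by
      rw [Real.norm_eq_abs, abs_of_nonneg (relu2_nonneg s)]
    have h2 : relu2 s ≤ c * ‖s - 0‖ := by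
      calc relu2 s ≤ s ^ 2 := relu2_le_sq s
        _ = |s| * |s| := by rw [← abs_mul, sq, abs_mul_self]
        _ ≤ c * |s| := mul_le_mul_of_nonneg_right habs.le (abs_nonneg s)
        _ = c * ‖s - 0‖ := by rw [sub_zero, Real.norm_eq_abs]
    rw [h1]; exact h2
  · have hp : HasDerivAt (fun s : ℝ => s ^ 2) (2 * t) t := by
      simpa using hasDerivAt_pow 2 t
    have he : relu2 =ᶠ[nhds t] fun s => s ^ 2 := by
      filter_upwards [Ioi_mem_nhds h] with s hs
      simp [relu2, max_eq_left (Set.mem_Ioi.mp hs).le]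
    have := hp.congr_of_eventuallyEq he
    simpa [relu1, max_eq_left h.le] using this

lemma contDiff_relu2 : ContDiff ℝ 1 relu2 := by
  rw [contDiff_one_iff_deriv]
  refine ⟨fun t => (hasDerivAt_relu2 t).differentiableAt, ?_⟩
  have : deriv relu2 = fun t => 2 * relu1 t := by
    funext t; exact (hasDerivAt_relu2 t).deriv
  rw [this]
  exact continuous_const.mul continuous_relu1

def euE (d : ℕ) (i : Fin d) : EuclideanSpace ℝ (Fin d) := EuclideanSpace.single i 1

lemma norm_gradient_sq (d : ℕ) (u : EuclideanSpace ℝ (Fin d) → ℝ) (x : EuclideanSpace ℝ (Fin d)) :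
    ‖gradient u x‖ ^ 2 = ∑ i, (fderiv ℝ u x (euE d i)) ^ 2 := by
  have hv : ∀ i, gradient u x i = fderiv ℝ u x (euE d i) := by
    intro i
    have h1 : (inner ℝ (gradient u x) (euE d i) : ℝ) = fderiv ℝ u x (euE d i) := by
      rw [gradient]; exact InnerProductSpace.toDual_symm_apply
    have h2 : (inner ℝ (gradient u x) (euE d i) : ℝ) = gradient u x i := by
      rw [euE, EuclideanSpace.inner_single_right]; simp
    rw [← h1, h2]
  rw [EuclideanSpace.norm_eq, Real.sq_sqrt (by positivity)]
  congr 1; funext i; rw [← hv i]; simp [sq_abs]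

def AffineIn {K : ℕ} (H : EuclideanSpace ℝ (Fin d) → Fin K → ℝ)
    (f : EuclideanSpace ℝ (Fin d) → ℝ) : Prop :=
  ∃ (row : Fin K → ℝ) (c : ℝ), ∀ x, f x = (∑ l, H x l * row l) + c

namespace AffineIn

variable {K : ℕ} {H : EuclideanSpace ℝ (Fin d) → Fin K → ℝ}

lemma const (c : ℝ) : AffineIn H (fun _ => c) :=
  ⟨0, c, fun x => by simp⟩

lemma coord (l₀ : Fin K) : AffineIn H (fun x => H x l₀) := by
  refine ⟨fun l => if l = l₀ then 1 else 0, 0, fun x => ?_⟩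
  simp [mul_ite, Finset.sum_ite_eq']

lemma add {f g} (hf : AffineIn H f) (hg : AffineIn H g) :
    AffineIn H (fun x => f x + g x) := by
  obtain ⟨r1, c1, h1⟩ := hf; obtain ⟨r2, c2, h2⟩ := hg
  refine ⟨r1 + r2, c1 + c2, fun x => ?_⟩
  simp only [h1, h2, Pi.add_apply, mul_add, Finset.sum_add_distrib]; ring

lemma const_mul {f} (c : ℝ) (hf : AffineIn H f) : AffineIn H (fun x => c * f x) := by
  obtain ⟨r, c0, h⟩ := hf
  refine ⟨fun l => c * r l, c * c0, fun x => ?_⟩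
  simp only [h, Finset.mul_sum, mul_add]; ring_nf

lemma add_const {f} (c : ℝ) (hf : AffineIn H f) : AffineIn H (fun x => f x + c) :=
  hf.add (const c)

lemma sum {ι : Type*} (s : Finset ι) (f : ι → EuclideanSpace ℝ (Fin d) → ℝ)
    (h : ∀ i ∈ s, AffineIn H (f i)) : AffineIn H (fun x => ∑ i ∈ s, f i x) := by
  classical
  induction s using Finset.induction with
  | empty => simpa using const 0
  | insert a s' hni ih =>
    have : AffineIn H (fun x => f a x + ∑ i ∈ s', f i x) :=
      (h a (Finset.mem_insert_self a s')).add (ih fun i hi => h i (Finset.mem_insert_of_mem hi))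
    simpa [Finset.sum_insert hni] using this

end AffineIn

lemma layer_mk {acts : Set (ℝ → ℝ)} {W' n K' K : ℕ}
    {H : EuclideanSpace ℝ (Fin d) → Fin K' → ℝ}
    (hH : NNHidden acts d W' n K' H)
    (z : EuclideanSpace ℝ (Fin d) → Fin K → ℝ) (ρ : Fin K → ℝ → ℝ)
    (hρ : ∀ j, ρ j ∈ acts) (hK : K ≤ W')
    (hz : ∀ j, AffineIn H (fun x => z x j)) :
    NNHidden acts d W' (n + 1) K (fun x j => ρ j (z x j)) := by
  choose row c hrc using hz
  have h := NNHidden.layer hH (Matrix.of fun j l => row j l) c ρ hρ hK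
  have he : (fun x j => ρ j (((Matrix.of fun j l => row j l).mulVec (H x) + c) j))
      = fun (x : EuclideanSpace ℝ (Fin d)) j => ρ j (z x j) := by
    funext x j
    congr 1
    have h1 : z x j = ∑ l, H x l * row j l + c j := hrc j x
    rw [h1]
    simp [Matrix.mulVec, dotProduct, mul_comm]
  rwa [he] at h

lemma NNHidden.contDiff_coords {acts : Set (ℝ → ℝ)} {W n k : ℕ}
    {g : EuclideanSpace ℝ (Fin d) → Fin k → ℝ}
    (hacts : ∀ f ∈ acts, ContDiff ℝ 1 f)
    (h : NNHidden acts d W n k g) : ∀ j, ContDiff ℝ 1 fun x => g x j := by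
  induction h with
  | base => exact fun j => (EuclideanSpace.proj (𝕜 := ℝ) j).contDiff
  | layer hg A b ρ hρ hk' ih =>
    rename_i D' k1 k2 g1
    intro j
    have hz : ContDiff ℝ 1 fun x => (∑ l, A j l * g1 x l) + b j :=
      (ContDiff.sum fun l _ => contDiff_const.mul (ih l)).add contDiff_const
    have he : (fun x => ρ j ((A.mulVec (g1 x) + b) j))
        = fun x => ρ j ((∑ l, A j l * g1 x l) + b j) := by
      funext x; simp [Matrix.mulVec, dotProduct]
    rw [he]
    exact (hacts _ (hρ j)).comp hz
section
variable {d : ℕ}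

lemma hasFDerivAt_affine_comb {k K : ℕ} (A : Matrix (Fin K) (Fin k) ℝ) (b : Fin K → ℝ)
    (g : EuclideanSpace ℝ (Fin d) → Fin k → ℝ)
    (hC : ∀ l, ContDiff ℝ 1 fun x => g x l) (j : Fin K) (x : EuclideanSpace ℝ (Fin d)) :
    HasFDerivAt (fun x => (A.mulVec (g x) + b) j)
      (∑ l, A j l • fderiv ℝ (fun x => g x l) x) x := by
  have h1 : ∀ l : Fin k, HasFDerivAt (fun x => A j l * g x l)
      (A j l • fderiv ℝ (fun x => g x l) x) x := by
    intro l
    exact (((hC l).differentiable one_ne_zero x).hasFDerivAt).const_mul (A j l)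
  have h2 := HasFDerivAt.fun_sum (fun l (_ : l ∈ Finset.univ) => h1 l)
  have h3 := h2.add_const (b j)
  have he : (fun x => (A.mulVec (g x) + b) j)
      = fun x => (∑ l, A j l * g x l) + b j := by
    funext y; simp [Matrix.mulVec, dotProduct]
  rw [he]
  exact h3

lemma fderiv_relu2_layer {k K : ℕ} (A : Matrix (Fin K) (Fin k) ℝ) (b : Fin K → ℝ)
    (g : EuclideanSpace ℝ (Fin d) → Fin k → ℝ)
    (hC : ∀ l, ContDiff ℝ 1 fun x => g x l) (j : Fin K) (x : EuclideanSpace ℝ (Fin d))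
    (v : EuclideanSpace ℝ (Fin d)) :
    fderiv ℝ (fun x => relu2 ((A.mulVec (g x) + b) j)) x v
      = 2 * relu1 ((A.mulVec (g x) + b) j) *
        (∑ l, A j l * fderiv ℝ (fun x => g x l) x v) := by
  have hz := hasFDerivAt_affine_comb A b g hC j x
  have hcomp := (hasDerivAt_relu2 ((A.mulVec (g x) + b) j)).comp_hasFDerivAt x hz
  have := hcomp.fderiv
  rw [show (fun x => relu2 ((A.mulVec (g x) + b) j))
      = relu2 ∘ (fun x => (A.mulVec (g x) + b) j) from rfl, this]
  simp only [ContinuousLinearMap.coe_smul', Pi.smul_apply, ContinuousLinearMap.coe_sum',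
    Finset.sum_apply, smul_eq_mul]

end
section
variable {d : ℕ} {K : ℕ} {H : EuclideanSpace ℝ (Fin d) → Fin K → ℝ}

lemma AffineIn.congr {f f' : EuclideanSpace ℝ (Fin d) → ℝ} (h : AffineIn H f)
    (he : ∀ x, f' x = f x) : AffineIn H f' := by
  obtain ⟨r, c, hr⟩ := h; exact ⟨r, c, fun x => (he x).trans (hr x)⟩

lemma AffineIn.neg {f : EuclideanSpace ℝ (Fin d) → ℝ} (h : AffineIn H f) :
    AffineIn H (fun x => -(f x)) :=
  (h.const_mul (-1)).congr (fun x => by ring)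

lemma AffineIn.sub {f g : EuclideanSpace ℝ (Fin d) → ℝ} (hf : AffineIn H f)
    (hg : AffineIn H g) : AffineIn H (fun x => f x - g x) :=
  (hf.add hg.neg).congr (fun x => by ring)

def glue {α : Sort*} {a b : ℕ} (f : Fin a → α) (g : Fin b → α) : Fin (a + b) → α :=
  Fin.addCases f g

@[simp] lemma glue_left {α : Sort*} {a b : ℕ} (f : Fin a → α) (g : Fin b → α) (i : Fin a) :
    glue f g (Fin.castAdd b i) = f i := Fin.addCases_left i

@[simp] lemma glue_right {α : Sort*} {a b : ℕ} (f : Fin a → α) (g : Fin b → α) (i : Fin b) :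
    glue f g (Fin.natAdd a i) = g i := Fin.addCases_right i

lemma forall_glue {a b : ℕ} {P : Fin (a + b) → Prop}
    (hl : ∀ i, P (Fin.castAdd b i)) (hr : ∀ i, P (Fin.natAdd a i)) : ∀ j, P j :=
  fun j => Fin.addCases hl hr j

/-- index pattern for the 4-unit product gadget -/
def parg (r : Fin 4) (p q : ℝ) : ℝ := ![p + q, -(p + q), p - q, -(p - q)] r

def pw (r : Fin 4) : ℝ := ![(1 : ℝ)/2, 1/2, -(1/2), -(1/2)] r

lemma parg_zero (p q : ℝ) : parg 0 p q = p + q := rfl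
lemma parg_one (p q : ℝ) : parg 1 p q = -(p + q) := rfl
lemma parg_two (p q : ℝ) : parg 2 p q = p - q := rfl
lemma parg_three (p q : ℝ) : parg 3 p q = -(p - q) := rfl

lemma relu2_combo (p q : ℝ) : ∑ r : Fin 4, pw r * relu2 (parg r p q) = 2 * (p * q) := by
  rw [Fin.sum_univ_four, parg_zero, parg_one, parg_two, parg_three,
    show pw 0 = 1/2 from rfl, show pw 1 = 1/2 from rfl, show pw 2 = -(1/2) from rfl,
    show pw 3 = -(1/2) from rfl]
  linarith [relu2_prod p q]

lemma AffineIn.parg' {p q : EuclideanSpace ℝ (Fin d) → ℝ} (r : Fin 4)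
    (hp : AffineIn H p) (hq : AffineIn H q) :
    AffineIn H (fun x => parg r (p x) (q x)) := by
  fin_cases r
  · exact (hp.add hq).congr (fun x => parg_zero _ _)
  · exact ((hp.add hq).neg).congr (fun x => parg_one _ _)
  · exact (hp.sub hq).congr (fun x => parg_two _ _)
  · exact ((hp.sub hq).neg).congr (fun x => parg_three _ _)

lemma AffineIn.combo4 {K : ℕ} {H : EuclideanSpace ℝ (Fin d) → Fin K → ℝ}
    (idx : Fin 4 → Fin K) :
    AffineIn H (fun x => ∑ r : Fin 4, pw r * H x (idx r)) :=
  AffineIn.sum Finset.univ _ (fun r _ => (AffineIn.coord (idx r)).const_mul (pw r))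

/-- the triple index equivalence -/
def eprod (d k : ℕ) : Fin d × (Fin k × Fin 4) ≃ Fin (d * (k * 4)) :=
  (Equiv.prodCongr (Equiv.refl _) finProdFinEquiv).trans finProdFinEquiv

lemma mem_acts_relu1 : relu1 ∈ ({relu1, relu2} : Set (ℝ → ℝ)) := Set.mem_insert _ _
lemma mem_acts_relu2 : relu2 ∈ ({relu1, relu2} : Set (ℝ → ℝ)) :=
  Set.mem_insert_of_mem _ rfl
end
section
variable {d : ℕ}

lemma contDiff_relu2_layer {k K : ℕ} (A : Matrix (Fin K) (Fin k) ℝ) (b : Fin K → ℝ)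
    (g : EuclideanSpace ℝ (Fin d) → Fin k → ℝ)
    (hC : ∀ l, ContDiff ℝ 1 fun x => g x l) (j : Fin K) :
    ContDiff ℝ 1 fun x => relu2 ((A.mulVec (g x) + b) j) := by
  have hz : ContDiff ℝ 1 fun x => (∑ l, A j l * g x l) + b j :=
    (ContDiff.sum fun l _ => contDiff_const.mul (hC l)).add contDiff_const
  have he : (fun x => relu2 ((A.mulVec (g x) + b) j))
      = fun x => relu2 ((∑ l, A j l * g x l) + b j) := by
    funext x; simp [Matrix.mulVec, dotProduct]
  rw [he]
  exact contDiff_relu2.comp hz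

lemma fderiv_coord (l : Fin d) (x v : EuclideanSpace ℝ (Fin d)) :
    fderiv ℝ (fun y : EuclideanSpace ℝ (Fin d) => y l) x v = v l := by
  have he : (fun y : EuclideanSpace ℝ (Fin d) => y l)
      = ⇑(EuclideanSpace.proj (𝕜 := ℝ) l) := rfl
  rw [he, (EuclideanSpace.proj (𝕜 := ℝ) l).fderiv]; rfl

lemma main_inv {D W : ℕ} (hd : 1 ≤ d) {n k : ℕ}
    {g : EuclideanSpace ℝ (Fin d) → Fin k → ℝ}
    (hg : NNHidden {relu2} d W n k g) :
    1 ≤ n → n + 2 ≤ D →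
    k ≤ W ∧ (∀ j, ContDiff ℝ 1 fun x => g x j) ∧
    ∃ (K : ℕ) (H : EuclideanSpace ℝ (Fin d) → Fin K → ℝ),
      NNHidden {relu1, relu2} d (d * (D + 2) * W) n K H ∧
      (∀ j, AffineIn H (fun x => g x j)) ∧
      (∀ j, AffineIn H (fun x => Real.sqrt (g x j))) ∧
      (∀ (i : Fin d) (j : Fin k), ∃ q, AffineIn H q ∧
        ∀ x, fderiv ℝ (fun y => g y j) x (euE d i) = 2 * Real.sqrt (g x j) * q x) := by
  induction hg with
  | base => intro h1 _; exact absurd h1 (by norm_num)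
  | layer hg A b ρ hρ hk' ih =>
    rename_i n1 k1 k2 g1
    intro _ h2
    have hρ' : ∀ j, ρ j = relu2 := fun j => hρ j
    have hgfun : (fun x (j : Fin k2) => ρ j ((A.mulVec (g1 x) + b) j))
        = fun x j => relu2 ((A.mulVec (g1 x) + b) j) := by
      funext x j; rw [hρ' j]
    rw [hgfun]
    rcases n1 with _ | m
    · -- first hidden layer : g1 = identity
      cases hg
      have hD3 : 3 ≤ D := by omega
      refine ⟨hk', fun j => contDiff_relu2_layer A b _
        (fun l => (EuclideanSpace.proj (𝕜 := ℝ) l).contDiff) j, ?_⟩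
      have hwidth : k2 + k2 ≤ d * (D + 2) * W := by
        have h5 : 2 ≤ d * (D + 2) := le_trans (by omega) (Nat.le_mul_of_pos_left _ hd)
        calc k2 + k2 ≤ 2 * W := by omega
          _ ≤ d * (D + 2) * W := Nat.mul_le_mul_right W h5
      have hzaff : ∀ j : Fin k2,
          AffineIn (fun (x : EuclideanSpace ℝ (Fin d)) (l : Fin d) => x l)
            (fun x => (A.mulVec x + b) j) := by
        intro j
        refine ⟨fun l => A j l, b j, fun x => ?_⟩
        simp [Matrix.mulVec, dotProduct, mul_comm]
      have hH := layer_mk (NNHidden.base)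
        (z := fun x => glue (fun j : Fin k2 => (A.mulVec x + b) j)
          (fun j : Fin k2 => (A.mulVec x + b) j))
        (ρ := glue (fun _ => relu2) (fun _ => relu1))
        (forall_glue (fun _ => by simp only [glue_left]; exact mem_acts_relu2)
          (fun _ => by simp only [glue_right]; exact mem_acts_relu1))
        hwidth
        (forall_glue
          (fun j => (hzaff j).congr (fun x => by simp only [glue_left]))
          (fun j => (hzaff j).congr (fun x => by simp only [glue_right])))
      refine ⟨k2 + k2, _, hH, ?_, ?_, ?_⟩
      · intro j
        refine (AffineIn.coord (Fin.castAdd k2 j)).congr (fun x => ?_)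
        simp only [glue_left]
      · intro j
        refine (AffineIn.coord (Fin.natAdd k2 j)).congr (fun x => ?_)
        simp only [glue_right, sqrt_relu2]
      · intro i j
        refine ⟨fun _ => A j i, AffineIn.const _, fun x => ?_⟩
        have hfd := fderiv_relu2_layer A b (fun x (j : Fin d) => x j)
          (fun l => (EuclideanSpace.proj (𝕜 := ℝ) l).contDiff) j x (euE d i)
        rw [hfd, sqrt_relu2]
        congr 1
        have hco : ∀ l : Fin d, fderiv ℝ
            (fun y : EuclideanSpace ℝ (Fin d) => y l) x (euE d i)
            = euE d i l := fun l => fderiv_coord l x _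
        simp only [hco]
        simp [euE, EuclideanSpace.single_apply, mul_ite, mul_one, mul_zero,
          Finset.sum_ite_eq']
    · -- later hidden layers
      obtain ⟨hk1, hC1, K, H, hH, hV, hS, hQ⟩ := ih (by omega) (by omega)
      choose q hqA hqE using hQ
      have hD4 : m + 4 ≤ D := by omega
      have hzaff : ∀ j : Fin k2, AffineIn H (fun x => (A.mulVec (g1 x) + b) j) := by
        intro j
        have hs : AffineIn H (fun x => ∑ l, A j l * g1 x l) :=
          AffineIn.sum Finset.univ _ (fun l _ => (hV l).const_mul (A j l))
        exact (hs.add_const (b j)).congr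
          (fun x => by simp [Matrix.mulVec, dotProduct])
      have hwidth : k2 + (k2 + d * (k1 * 4)) ≤ d * (D + 2) * W := by
        have h6 : 6 ≤ D + 2 := by omega
        have hdW : W ≤ d * W := Nat.le_mul_of_pos_left W hd
        have step1 : k2 + (k2 + d * (k1 * 4)) ≤ W + (W + d * (W * 4)) :=
          Nat.add_le_add hk' (Nat.add_le_add hk'
            (Nat.mul_le_mul_left d (Nat.mul_le_mul_right 4 hk1)))
        calc k2 + (k2 + d * (k1 * 4)) ≤ W + (W + d * (W * 4)) := step1
          _ ≤ (d * W) + ((d * W) + d * (W * 4)) :=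
            Nat.add_le_add hdW (Nat.add_le_add hdW le_rfl)
          _ = 6 * (d * W) := by ring
          _ ≤ (D + 2) * (d * W) := Nat.mul_le_mul_right _ h6
          _ = d * (D + 2) * W := by ring
      have hH' := layer_mk hH
        (z := fun x => glue (fun j : Fin k2 => (A.mulVec (g1 x) + b) j)
          (glue (fun j : Fin k2 => (A.mulVec (g1 x) + b) j)
            (fun J : Fin (d * (k1 * 4)) => parg ((eprod d k1).symm J).2.2
              (Real.sqrt (g1 x ((eprod d k1).symm J).2.1))
              (q ((eprod d k1).symm J).1 ((eprod d k1).symm J).2.1 x))))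
        (ρ := glue (fun _ => relu2) (glue (fun _ => relu1) (fun _ => relu2)))
        (forall_glue (fun _ => by simp only [glue_left]; exact mem_acts_relu2)
          (forall_glue (fun _ => by simp only [glue_right, glue_left]; exact mem_acts_relu1)
            (fun _ => by simp only [glue_right]; exact mem_acts_relu2)))
        hwidth
        (forall_glue
          (fun j => (hzaff j).congr (fun x => by simp only [glue_left]))
          (forall_glue
            (fun j => (hzaff j).congr (fun x => by simp only [glue_right, glue_left]))
            (fun J => (AffineIn.parg' ((eprod d k1).symm J).2.2
                (hS ((eprod d k1).symm J).2.1)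
                (hqA ((eprod d k1).symm J).1 ((eprod d k1).symm J).2.1)).congr
              (fun x => by simp only [glue_right]))))
      refine ⟨hk', fun j => contDiff_relu2_layer A b g1 hC1 j,
        k2 + (k2 + d * (k1 * 4)), _, hH', ?_, ?_, ?_⟩
      · intro j
        refine (AffineIn.coord (Fin.castAdd _ j)).congr (fun x => ?_)
        simp only [glue_left]
      · intro j
        refine (AffineIn.coord (Fin.natAdd k2 (Fin.castAdd _ j))).congr (fun x => ?_)
        simp only [glue_right, glue_left, sqrt_relu2]
      · intro i j
        refine ⟨fun x => ∑ l, A j l * (2 * Real.sqrt (g1 x l) * q i l x), ?_, ?_⟩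
        · refine AffineIn.sum Finset.univ _ (fun l _ => ?_)
          refine ((AffineIn.combo4 (fun r =>
            Fin.natAdd k2 (Fin.natAdd k2 (eprod d k1 (i, (l, r)))))).const_mul
            (A j l)).congr (fun x => ?_)
          congr 1
          rw [mul_assoc, ← relu2_combo (Real.sqrt (g1 x l)) (q i l x)]
          refine Finset.sum_congr rfl (fun r _ => ?_)
          congr 1
          simp only [glue_right, Equiv.symm_apply_apply]
        · intro x
          have h1 := fderiv_relu2_layer A b g1 hC1 j x (euE d i)
          rw [h1, sqrt_relu2]
          congr 1
          refine Finset.sum_congr rfl (fun l _ => ?_)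
          rw [hqE i l x]
section
variable {d : ℕ}

def pm2 (r : Fin 2) (t : ℝ) : ℝ := ![t, -t] r

lemma pm2_zero (t : ℝ) : pm2 0 t = t := rfl
lemma pm2_one (t : ℝ) : pm2 1 t = -t := rfl

lemma relu2_pm2 (t : ℝ) : relu2 (pm2 0 t) + relu2 (pm2 1 t) = t ^ 2 := by
  rw [pm2_zero, pm2_one]; exact relu2_add_neg t

lemma AffineIn.pm2' {K : ℕ} {H : EuclideanSpace ℝ (Fin d) → Fin K → ℝ}
    {f : EuclideanSpace ℝ (Fin d) → ℝ} (r : Fin 2) (hf : AffineIn H f) :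
    AffineIn H (fun x => pm2 r (f x)) := by
  fin_cases r
  · exact hf.congr (fun x => pm2_zero _)
  · exact hf.neg.congr (fun x => pm2_one _)

def e2equiv (d : ℕ) : Fin d × Fin 2 ≃ Fin (d * 2) := finProdFinEquiv

set_option maxHeartbeats 2000000 in
lemma assemble {W' m K k₀ : ℕ} {H : EuclideanSpace ℝ (Fin d) → Fin K → ℝ}
    (hH : NNHidden {relu1, relu2} d W' m K H)
    (P : Fin d → EuclideanSpace ℝ (Fin d) → ℝ)
    (hP : ∀ i, ∃ (c : Fin k₀ → ℝ) (p qq : Fin k₀ → EuclideanSpace ℝ (Fin d) → ℝ),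
      (∀ j, AffineIn H (p j)) ∧ (∀ j, AffineIn H (qq j)) ∧
      ∀ x, P i x = ∑ j, c j * (p j x * qq j x))
    (h1 : d * (k₀ * 4) ≤ W') (h2 : d * 2 ≤ W') :
    ∃ (K' : ℕ) (G : EuclideanSpace ℝ (Fin d) → Fin K' → ℝ),
      NNHidden {relu1, relu2} d W' (m + 3) K' G ∧
      ∀ x, (∑ i, (P i x) ^ 2) = ∑ l, G x l * 1 := by
  choose c p qq hp hq hPe using hP
  -- layer 1 : products
  have hL1 := layer_mk hH
    (z := fun x => fun J : Fin (d * (k₀ * 4)) => parg ((eprod d k₀).symm J).2.2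
      (p ((eprod d k₀).symm J).1 ((eprod d k₀).symm J).2.1 x)
      (qq ((eprod d k₀).symm J).1 ((eprod d k₀).symm J).2.1 x))
    (ρ := fun _ => relu2) (fun _ => mem_acts_relu2) h1
    (fun J => AffineIn.parg' _ (hp _ _) (hq _ _))
  -- P i is affine in the layer-1 units
  have hPaff : ∀ i, AffineIn (fun x (J : Fin (d * (k₀ * 4))) => relu2
      (parg ((eprod d k₀).symm J).2.2
        (p ((eprod d k₀).symm J).1 ((eprod d k₀).symm J).2.1 x)
        (qq ((eprod d k₀).symm J).1 ((eprod d k₀).symm J).2.1 x))) (P i) := by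
    intro i
    refine (AffineIn.sum Finset.univ
      (fun (j : Fin k₀) => fun x => (c i j / 2) * ∑ r : Fin 4, pw r *
        (fun x (J : Fin (d * (k₀ * 4))) => relu2
          (parg ((eprod d k₀).symm J).2.2
            (p ((eprod d k₀).symm J).1 ((eprod d k₀).symm J).2.1 x)
            (qq ((eprod d k₀).symm J).1 ((eprod d k₀).symm J).2.1 x))) x
        (eprod d k₀ (i, (j, r))))
      (fun j _ => (AffineIn.combo4 (fun r => eprod d k₀ (i, (j, r)))).const_mul
        (c i j / 2))).congr (fun x => ?_)
    rw [hPe i x]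
    refine Finset.sum_congr rfl (fun j _ => ?_)
    have : (∑ r : Fin 4, pw r *
        (fun x (J : Fin (d * (k₀ * 4))) => relu2
          (parg ((eprod d k₀).symm J).2.2
            (p ((eprod d k₀).symm J).1 ((eprod d k₀).symm J).2.1 x)
            (qq ((eprod d k₀).symm J).1 ((eprod d k₀).symm J).2.1 x))) x
        (eprod d k₀ (i, (j, r))))
        = ∑ r : Fin 4, pw r * relu2 (parg r (p i j x) (qq i j x)) := by
      refine Finset.sum_congr rfl (fun r _ => ?_)
      congr 1
      simp only [Equiv.symm_apply_apply]
    rw [this, relu2_combo]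
    ring
  -- layer 2 : squares
  have hL2 := layer_mk hL1
    (z := fun x => fun J : Fin (d * 2) => pm2 ((e2equiv d).symm J).2
      (P ((e2equiv d).symm J).1 x))
    (ρ := fun _ => relu2) (fun _ => mem_acts_relu2) h2
    (fun J => AffineIn.pm2' _ (hPaff _))
  -- layer 3 : relu1 pass-through
  have hL3 := layer_mk hL2
    (z := fun x => fun J : Fin (d * 2) => relu2 (pm2 ((e2equiv d).symm J).2
      (P ((e2equiv d).symm J).1 x)))
    (ρ := fun _ => relu1) (fun _ => mem_acts_relu1) h2
    (fun J => (AffineIn.coord J).congr (fun x => rfl))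
  refine ⟨d * 2, _, hL3, fun x => ?_⟩
  have hcoord : ∀ (i : Fin d) (r : Fin 2),
      relu1 (relu2 (pm2 r (P i x))) = relu2 (pm2 r (P i x)) :=
    fun i r => relu1_of_nonneg (relu2_nonneg _)
  calc (∑ i, (P i x) ^ 2)
      = ∑ i, ∑ r : Fin 2, relu1 (relu2 (pm2 r (P i x))) := by
        refine Finset.sum_congr rfl (fun i _ => ?_)
        rw [Fin.sum_univ_two, hcoord i 0, hcoord i 1, relu2_pm2]
    _ = ∑ t : Fin d × Fin 2, relu1 (relu2 (pm2 t.2 (P t.1 x))) := by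
        rw [Fintype.sum_prod_type]
    _ = ∑ l, (fun x (J : Fin (d * 2)) => relu1 (relu2 (pm2 ((e2equiv d).symm J).2
          (P ((e2equiv d).symm J).1 x)))) x l * 1 := by
        rw [← Equiv.sum_comp (e2equiv d)
          (fun J => (fun x (J : Fin (d * 2)) => relu1 (relu2 (pm2 ((e2equiv d).symm J).2
            (P ((e2equiv d).symm J).1 x)))) x J * 1)]
        refine Finset.sum_congr rfl (fun t _ => ?_)
        simp only [Equiv.symm_apply_apply, mul_one]

lemma nn_zero_width {acts : Set (ℝ → ℝ)} (hr2 : relu2 ∈ acts) {W n : ℕ} :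
    ∃ g, NNHidden acts d W (n + 1) 0 g := by
  induction n with
  | zero =>
    exact ⟨_, NNHidden.layer NNHidden.base (fun (j : Fin 0) l => 0) (fun j => 0)
      (fun _ => relu2) (fun _ => hr2) (Nat.zero_le W)⟩
  | succ n ih =>
    obtain ⟨g, hg⟩ := ih
    exact ⟨_, NNHidden.layer hg (fun (j : Fin 0) (l : Fin 0) => 0) (fun j => 0)
      (fun _ => relu2) (fun _ => hr2) (Nat.zero_le W)⟩
end
section
variable {d : ℕ}

lemma fderiv_affine_out {k : ℕ} (Aout : Matrix (Fin 1) (Fin k) ℝ) (bout : ℝ)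
    (g₀ : EuclideanSpace ℝ (Fin d) → Fin k → ℝ)
    (hC : ∀ l, ContDiff ℝ 1 fun x => g₀ x l) (x v : EuclideanSpace ℝ (Fin d)) :
    fderiv ℝ (fun x => ((Aout.mulVec (g₀ x) + (fun _ => bout) : Fin 1 → ℝ)) 0) x v
      = ∑ l, Aout 0 l * fderiv ℝ (fun y => g₀ y l) x v := by
  have h := (hasFDerivAt_affine_comb Aout (fun _ => bout) g₀ hC 0 x).fderiv
  rw [h]
  simp only [ContinuousLinearMap.coe_sum', Finset.sum_apply,
    ContinuousLinearMap.coe_smul', Pi.smul_apply, smul_eq_mul]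

lemma contDiff_affine_out {k : ℕ} (Aout : Matrix (Fin 1) (Fin k) ℝ) (bout : ℝ)
    (g₀ : EuclideanSpace ℝ (Fin d) → Fin k → ℝ)
    (hC : ∀ l, ContDiff ℝ 1 fun x => g₀ x l) :
    ContDiff ℝ 1 (fun x => ((Aout.mulVec (g₀ x) + (fun _ => bout) : Fin 1 → ℝ)) 0) := by
  have he : (fun x => ((Aout.mulVec (g₀ x) + (fun _ => bout) : Fin 1 → ℝ)) 0)
      = fun x => (∑ l, Aout 0 l * g₀ x l) + bout := by
    funext x; simp [Matrix.mulVec, dotProduct]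
  rw [he]
  exact (ContDiff.sum fun l _ => contDiff_const.mul (hC l)).add contDiff_const

lemma nn_width_le {acts : Set (ℝ → ℝ)} {W n k : ℕ}
    {g : EuclideanSpace ℝ (Fin d) → Fin k → ℝ}
    (h : NNHidden acts d W n k g) (hn : 1 ≤ n) : k ≤ W := by
  cases h with
  | base => exact absurd hn (by norm_num)
  | layer hg A b ρ hρ hk' => exact hk'

lemma isNetwork_const {acts : Set (ℝ → ℝ)} (hr2 : relu2 ∈ acts)
    (f : EuclideanSpace ℝ (Fin d) → ℝ) (C : ℝ) (hf : ∀ x, f x = C)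
    (D' W'' : ℕ) (hD' : 2 ≤ D') : IsNetwork acts d D' W'' f := by
  obtain ⟨g, hg⟩ := nn_zero_width (d := d) (W := W'') hr2 (n := D' - 2)
  refine ⟨0, g, fun _ _ => 0, C, ?_, ?_⟩
  · have hD : D' - 1 = (D' - 2) + 1 := by omega
    rw [hD]; exact hg
  · intro x; rw [hf x]; simp [Matrix.mulVec, dotProduct]
end

section
variable {d : ℕ}

lemma coord_sum {k2 : ℕ} (A : Matrix (Fin k2) (Fin d) ℝ) (j : Fin k2) (i : Fin d)
    (x : EuclideanSpace ℝ (Fin d)) :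
    (∑ l, A j l * fderiv ℝ (fun y : EuclideanSpace ℝ (Fin d) => y l) x (euE d i)) = A j i := by
  have hco : ∀ l : Fin d, fderiv ℝ (fun y : EuclideanSpace ℝ (Fin d) => y l) x (euE d i)
      = euE d i l := fun l => fderiv_coord l x _
  simp only [hco]
  simp [euE, EuclideanSpace.single_apply, mul_ite, mul_one, mul_zero, Finset.sum_ite_eq']
end

set_option maxHeartbeats 2000000 in
/-- **The squared gradient norm of a `ReLU²` network is a `ReLU`–`ReLU²` network
(claim in Lemma 3.10).**  If `u : ℝ^d → ℝ` is implemented by a `ReLU²` network of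
depth `D` and width `W`, then `u` is `C¹` and `x ↦ ‖∇u(x)‖₂²` is implemented
exactly by a `ReLU`–`ReLU²` network of depth `D + 3` and width at most
`d·(D+2)·W`. -/
theorem grad_norm_sq_is_relu_relu2_network (d D W : ℕ)
    (u : EuclideanSpace ℝ (Fin d) → ℝ)
    (hu : IsNetwork {relu2} d D W u) :
    ContDiff ℝ 1 u ∧
    ∃ g : EuclideanSpace ℝ (Fin d) → ℝ,
      IsNetwork {relu1, relu2} d (D + 3) (d * (D + 2) * W) g ∧
      ∀ x, g x = ‖gradient u x‖^2 := by
  classical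
  obtain ⟨k₀, g₀, Aout, bout, hg₀, hu_eq⟩ := hu
  have hueq2 : u = fun x => ((Aout.mulVec (g₀ x) + (fun _ => bout) : Fin 1 → ℝ)) 0 :=
    funext fun x => by rw [hu_eq x]; rfl
  have hC₀ : ∀ j, ContDiff ℝ 1 fun x => g₀ x j :=
    NNHidden.contDiff_coords
      (fun f hf => by rw [show f = relu2 from hf]; exact contDiff_relu2) hg₀
  have hCu : ContDiff ℝ 1 u := by
    rw [hueq2]; exact contDiff_affine_out Aout bout g₀ hC₀
  refine ⟨hCu, fun x => ∑ i, (fderiv ℝ u x (euE d i))^2, ?_,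
    fun x => (norm_gradient_sq d u x).symm⟩
  by_cases hd0 : d = 0
  · subst hd0
    exact isNetwork_const mem_acts_relu2 _ 0 (fun x => by simp) (D + 3) _ (by omega)
  have hd : 1 ≤ d := Nat.one_le_iff_ne_zero.mpr hd0
  by_cases hD1 : D ≤ 1
  · -- u is affine
    have hD0 : D - 1 = 0 := by omega
    rw [hD0] at hg₀
    cases hg₀
    have hfd : ∀ (x : EuclideanSpace ℝ (Fin d)) i, fderiv ℝ u x (euE d i) = Aout 0 i := by
      intro x i
      rw [hueq2, fderiv_affine_out Aout bout (fun x (j : Fin d) => x j)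
        (fun l => (EuclideanSpace.proj (𝕜 := ℝ) l).contDiff) x (euE d i)]
      exact coord_sum Aout 0 i x
    exact isNetwork_const mem_acts_relu2 _ (∑ i, (Aout 0 i)^2)
      (fun x => by simp only [hfd]) (D + 3) _ (by omega)
  push_neg at hD1
  have hD2 : 2 ≤ D := hD1
  obtain ⟨m, hm⟩ : ∃ m, D - 1 = m + 1 := ⟨D - 2, by omega⟩
  rw [hm] at hg₀
  by_cases hW0 : W = 0
  · -- width 0 : u is constant
    have hk0 : k₀ = 0 := by have := nn_width_le hg₀ (by omega); omega
    subst hk0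
    have hufun : u = fun _ => bout := funext fun x => by
      rw [hu_eq x]; simp [Matrix.mulVec, dotProduct]
    have hfd : ∀ (x : EuclideanSpace ℝ (Fin d)) i, fderiv ℝ u x (euE d i) = 0 := by
      intro x i; rw [hufun]; simp
    exact isNetwork_const mem_acts_relu2 _ 0 (fun x => by simp [hfd]) (D + 3) _ (by omega)
  have hW : 1 ≤ W := Nat.one_le_iff_ne_zero.mpr hW0
  -- main case
  cases hg₀ with
  | layer hg1 A b ρ hρ hk' =>
    rename_i k1 g1
    have hρ' : ∀ j, ρ j = relu2 := fun j => hρ j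
    have hgfun : (fun x (j : Fin k₀) => ρ j ((A.mulVec (g1 x) + b) j))
        = fun x j => relu2 ((A.mulVec (g1 x) + b) j) :=
      funext fun x => funext fun j => by rw [hρ' j]
    rw [hgfun] at hueq2 hC₀
    have hfdu : ∀ (x v : EuclideanSpace ℝ (Fin d)), fderiv ℝ u x v
        = ∑ j, Aout 0 j * fderiv ℝ (fun y => relu2 ((A.mulVec (g1 y) + b) j)) x v := by
      intro x v
      rw [hueq2]
      exact fderiv_affine_out Aout bout _ hC₀ x v
    have hh1 : d * (k₀ * 4) ≤ d * (D + 2) * W := by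
      have h4 : 4 ≤ D + 2 := by omega
      calc d * (k₀ * 4) ≤ d * (W * 4) :=
            Nat.mul_le_mul_left d (Nat.mul_le_mul_right 4 hk')
        _ = 4 * (d * W) := by ring
        _ ≤ (D + 2) * (d * W) := Nat.mul_le_mul_right _ h4
        _ = d * (D + 2) * W := by ring
    have hh2 : d * 2 ≤ d * (D + 2) * W := by
      have h4 : 4 * 1 ≤ (D + 2) * W := Nat.mul_le_mul (by omega) hW
      calc d * 2 ≤ d * ((D + 2) * W) := Nat.mul_le_mul_left d (by omega)
        _ = d * (D + 2) * W := by ring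
    rcases m with _ | m'
    · -- D = 2
      cases hg1
      have hwid : k₀ ≤ d * (D + 2) * W := by
        have : W ≤ d * (D + 2) * W := by
          calc W = 1 * W := by ring
            _ ≤ d * (D + 2) * W := Nat.mul_le_mul_right W
              (by nlinarith)
        omega
      have hzaff : ∀ j : Fin k₀,
          AffineIn (fun (x : EuclideanSpace ℝ (Fin d)) (l : Fin d) => x l)
            (fun x => (A.mulVec x + b) j) := by
        intro j
        exact ⟨fun l => A j l, b j, fun x => by
          simp [Matrix.mulVec, dotProduct, mul_comm]⟩
      have hHs := layer_mk (NNHidden.base)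
        (z := fun x => fun j : Fin k₀ => (A.mulVec x + b) j)
        (ρ := fun _ => relu1) (fun _ => mem_acts_relu1) hwid hzaff
      obtain ⟨K', G, hG, hsum⟩ := assemble hHs
        (P := fun i x => fderiv ℝ u x (euE d i))
        (hP := fun i => ⟨fun j => 2 * Aout 0 j,
          fun j x => relu1 ((A.mulVec x + b) j), fun j _ => A j i,
          fun j => (AffineIn.coord j).congr (fun x => rfl),
          fun j => AffineIn.const _,
          fun x => by
            show fderiv ℝ u x (euE d i)
              = ∑ j, 2 * Aout 0 j * (relu1 ((A.mulVec x + b) j) * A j i)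
            have hfdu0 : ∀ (x v : EuclideanSpace ℝ (Fin d)), fderiv ℝ u x v
                = ∑ j, Aout 0 j * fderiv ℝ
                  (fun y : EuclideanSpace ℝ (Fin d) => relu2 ((A.mulVec y + b) j)) x v := hfdu
            have hlay : ∀ (j : Fin k₀) (v : EuclideanSpace ℝ (Fin d)),
                fderiv ℝ (fun y : EuclideanSpace ℝ (Fin d) => relu2 ((A.mulVec y + b) j)) x v
                = 2 * relu1 ((A.mulVec x + b) j) *
                  (∑ l, A j l * fderiv ℝ
                    (fun y : EuclideanSpace ℝ (Fin d) => y l) x v) :=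
              fun j v => fderiv_relu2_layer A b (fun x (j : Fin d) => x j)
                (fun l => (EuclideanSpace.proj (𝕜 := ℝ) l).contDiff) j x v
            rw [hfdu0 x (euE d i)]
            refine Finset.sum_congr rfl (fun j _ => ?_)
            rw [hlay j (euE d i), coord_sum A j i x]
            ring⟩)
        hh1 hh2
      refine ⟨K', G, fun _ _ => 1, 0, ?_, ?_⟩
      · have hD' : D + 3 - 1 = (0 + 1) + 3 := by omega
        rw [hD']; exact hG
      · intro x
        show (∑ i, (fderiv ℝ u x (euE d i))^2) = _
        have hs2 : (∑ i, (fderiv ℝ u x (euE d i))^2) = ∑ l, G x l * 1 := hsum x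
        rw [hs2]
        simp [Matrix.mulVec, dotProduct, mul_comm]
    · -- D ≥ 3
      obtain ⟨hk1, hC1, K, H, hH, hV, hS, hQ⟩ :=
        main_inv (D := D) (W := W) hd hg1 (by omega) (by omega)
      choose q hqA hqE using hQ
      have hD3 : 3 ≤ D := by omega
      have hzaff : ∀ j : Fin k₀, AffineIn H (fun x => (A.mulVec (g1 x) + b) j) := by
        intro j
        have hs : AffineIn H (fun x => ∑ l, A j l * g1 x l) :=
          AffineIn.sum Finset.univ _ (fun l _ => (hV l).const_mul (A j l))
        exact (hs.add_const (b j)).congr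
          (fun x => by simp [Matrix.mulVec, dotProduct])
      have hwid : k₀ + d * (k1 * 4) ≤ d * (D + 2) * W := by
        have h5 : 5 ≤ D + 2 := by omega
        have hdW : W ≤ d * W := Nat.le_mul_of_pos_left W hd
        calc k₀ + d * (k1 * 4) ≤ W + d * (W * 4) :=
              Nat.add_le_add hk' (Nat.mul_le_mul_left d (Nat.mul_le_mul_right 4 hk1))
          _ ≤ (d * W) + d * (W * 4) := Nat.add_le_add hdW le_rfl
          _ = 5 * (d * W) := by ring
          _ ≤ (D + 2) * (d * W) := Nat.mul_le_mul_right _ h5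
          _ = d * (D + 2) * W := by ring
      have hHs := layer_mk hH
        (z := fun x => glue (fun j : Fin k₀ => (A.mulVec (g1 x) + b) j)
          (fun J : Fin (d * (k1 * 4)) => parg ((eprod d k1).symm J).2.2
            (Real.sqrt (g1 x ((eprod d k1).symm J).2.1))
            (q ((eprod d k1).symm J).1 ((eprod d k1).symm J).2.1 x)))
        (ρ := glue (fun _ => relu1) (fun _ => relu2))
        (forall_glue (fun _ => by simp only [glue_left]; exact mem_acts_relu1)
          (fun _ => by simp only [glue_right]; exact mem_acts_relu2))
        hwid
        (forall_glue
          (fun j => (hzaff j).congr (fun x => by simp only [glue_left]))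
          (fun J => (AffineIn.parg' ((eprod d k1).symm J).2.2
              (hS ((eprod d k1).symm J).2.1)
              (hqA ((eprod d k1).symm J).1 ((eprod d k1).symm J).2.1)).congr
            (fun x => by simp only [glue_right])))
      obtain ⟨K', G, hG, hsum⟩ := assemble hHs
        (P := fun i x => fderiv ℝ u x (euE d i))
        (hP := fun i => ⟨fun j => 2 * Aout 0 j,
          fun j x => relu1 ((A.mulVec (g1 x) + b) j),
          fun j x => ∑ l, A j l * (2 * Real.sqrt (g1 x l) * q i l x),
          fun j => (AffineIn.coord (Fin.castAdd (d * (k1 * 4)) j)).congr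
            (fun x => by simp only [glue_left]),
          fun j => AffineIn.sum Finset.univ _ (fun l _ =>
            ((AffineIn.combo4 (fun r =>
              Fin.natAdd k₀ (eprod d k1 (i, (l, r))))).const_mul (A j l)).congr
            (fun x => by
              congr 1
              rw [mul_assoc, ← relu2_combo (Real.sqrt (g1 x l)) (q i l x)]
              refine Finset.sum_congr rfl (fun r _ => ?_)
              congr 1
              simp only [glue_right, Equiv.symm_apply_apply])),
          fun x => by
            show fderiv ℝ u x (euE d i) = ∑ j, 2 * Aout 0 j *
              (relu1 ((A.mulVec (g1 x) + b) j) *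
                ∑ l, A j l * (2 * Real.sqrt (g1 x l) * q i l x))
            rw [hfdu x (euE d i)]
            refine Finset.sum_congr rfl (fun j _ => ?_)
            rw [fderiv_relu2_layer A b g1 hC1 j x (euE d i)]
            have hsum2 : (∑ l, A j l * fderiv ℝ (fun y => g1 y l) x (euE d i))
                = ∑ l, A j l * (2 * Real.sqrt (g1 x l) * q i l x) :=
              Finset.sum_congr rfl (fun l _ => by rw [hqE i l x])
            rw [hsum2]
            ring⟩)
        hh1 hh2
      refine ⟨K', G, fun _ _ => 1, 0, ?_, ?_⟩
      · have hD' : D + 3 - 1 = (m' + 1 + 1) + 3 := by omega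
        rw [hD']; exact hG
      · intro x
        show (∑ i, (fderiv ℝ u x (euE d i))^2) = _
        have hs2 : (∑ i, (fderiv ℝ u x (euE d i))^2) = ∑ l, G x l * 1 := hsum x
        rw [hs2]
        simp [Matrix.mulVec, dotProduct, mul_comm]
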